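/- arXiv:1104.0194 — 13 statements merged into one kernel-verified Lean document; each statement's English description precedes it below -/
import Mathlib

section
/- Let G be a finite abelian group and let A, B be nonempty subsets of G with |A| + |B| = |G|. Then either A + B = G, or there exists a subgroup H of G and an element a ∈ G such that A + H = A, B + H = B, and A + B = G \ (a + H). -/
open Pointwise

theorem sumset_structure_of_card_add_card_eq {G : Type*} [AddCommGroup G] [Fintype G]
    (A B : Set G) (hA : A.Nonempty) (hB : B.Nonempty)
    (h : A.ncard + B.ncard = Fintype.card G) :
    A + B = Set.univ ∨
      ∃ (H : AddSubgroup G) (a : G),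
        A + (H : Set G) = A ∧ B + (H : Set G) = B ∧
        A + B = Set.univ \ ({a} + (H : Set G)) := by
  by_cases hAB : A + B = Set.univ
  · exact Or.inl hAB
  right
  obtain ⟨c, hc⟩ : ∃ c, c ∉ A + B := by
    by_contra h'
    push_neg at h'
    exact hAB (Set.eq_univ_of_forall h')
  have memS : ∀ u z : G, z ∈ ({u} : Set G) - B ↔ ∃ b ∈ B, u - b = z := by
    intro u z; simp [Set.mem_sub]
  have memBg : ∀ g z : G, z ∈ B + ({g} : Set G) ↔ ∃ b ∈ B, b + g = z := by
    intro g z; constructor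
    · rintro ⟨b, hb, g', hg', hz⟩
      rw [Set.mem_singleton_iff] at hg'; subst hg'
      exact ⟨b, hb, hz⟩
    · rintro ⟨b, hb, hz⟩
      exact ⟨b, hb, g, rfl, hz⟩
  -- key: for any x not in A + B, A equals the complement of {x} - B
  have key : ∀ x : G, x ∉ A + B → A = ({x} - B)ᶜ := by
    intro x hx
    have hdisj : Disjoint A ({x} - B) := by
      rw [Set.disjoint_left]
      rintro a ha ha'
      rw [memS] at ha'
      obtain ⟨b, hb, hba⟩ := ha'
      exact hx ⟨a, ha, b, hb, by show a + b = x; rw [← hba]; abel⟩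
    have hcard : ({x} - B).ncard = B.ncard := by
      have himg : {x} - B = (fun b => x - b) '' B := by
        ext z; simp [Set.mem_sub, eq_comm]
      rw [himg]
      exact Set.ncard_image_of_injective _ (fun a b hab => by
        simpa [sub_right_injective.eq_iff] using hab)
    refine Set.eq_of_subset_of_ncard_le
      (Set.subset_compl_iff_disjoint_right.mpr hdisj) ?_ (Set.toFinite _)
    have h2 := Set.ncard_add_ncard_compl ({x} - B)
    rw [Nat.card_eq_fintype_card] at h2
    omega
  refine ⟨{ carrier := {g | B + {g} = B}
            zero_mem' := by simp
            add_mem' := by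
              intro g h hg hh
              show B + {g + h} = B
              rw [← Set.singleton_add_singleton, ← add_assoc, hg, hh]
            neg_mem' := by
              intro g hg
              show B + {-g} = B
              conv_lhs => rw [← hg]
              rw [add_assoc, Set.singleton_add_singleton]
              simp }, c, ?_, ?_, ?_⟩
  · -- A + H = A
    apply Set.Subset.antisymm
    · rintro z ⟨a, ha, g, hg, hz⟩
      have hg' : B + {g} = B := hg
      have hz' : a + g = z := hz
      rw [key c hc] at ha ⊢
      intro hmem
      rw [memS] at hmem
      obtain ⟨b, hb, hbz⟩ := hmem
      apply ha
      rw [memS]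
      refine ⟨b + g, ?_, ?_⟩
      · rw [← hg', memBg]; exact ⟨b, hb, rfl⟩
      · rw [← sub_eq_zero]
        have e : c - (b + g) - a = (c - b) - (a + g) := by abel
        rw [e, hz', hbz, sub_self]
    · intro a ha
      exact ⟨a, ha, 0, AddSubgroup.zero_mem _, add_zero a⟩
  · -- B + H = B
    apply Set.Subset.antisymm
    · rintro z ⟨b, hb, g, hg, hz⟩
      have hg' : B + {g} = B := hg
      rw [← hg']
      exact ⟨b, hb, g, rfl, hz⟩
    · intro b hb
      exact ⟨b, hb, 0, AddSubgroup.zero_mem _, add_zero b⟩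
  · -- A + B = univ \ (c + H)
    ext x
    simp only [Set.mem_diff, Set.mem_univ, true_and]
    constructor
    · intro hx hcH
      obtain ⟨y, hy, g, hg, hcg⟩ := hcH
      rw [Set.mem_singleton_iff] at hy
      have hcg' : c + g = x := by rw [← hy]; exact hcg
      have hg' : B + {g} = B := hg
      obtain ⟨a, ha, b, hb, hab⟩ := hx
      have hab' : a + b = x := hab
      have hbB : b ∈ B + {g} := by rw [hg']; exact hb
      rw [memBg] at hbB
      obtain ⟨b', hb', hb'g⟩ := hbB
      apply hc
      refine ⟨a, ha, b', hb', ?_⟩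
      rw [← sub_eq_zero]
      have e : a + b' - c = ((a + b) - (c + g)) + ((b' + g) - b) := by abel
      rw [e, hab', hcg', hb'g, sub_self, sub_self, add_zero]
    · intro hx
      by_contra hxAB
      apply hx
      refine ⟨c, rfl, x - c, ?_, by show c + (x - c) = x; abel⟩
      show B + {x - c} = B
      have hBB : {x} - B = {c} - B :=
        compl_injective ((key x hxAB).symm.trans (key c hc))
      apply Set.Subset.antisymm
      · intro z hz
        rw [memBg] at hz
        obtain ⟨b, hb, hbz⟩ := hz
        have h1 : c - b ∈ {c} - B := (memS c _).mpr ⟨b, hb, rfl⟩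
        rw [← hBB, memS] at h1
        obtain ⟨b', hb', hb'e⟩ := h1
        have hzb : z = b' := by
          rw [← sub_eq_zero]
          have e : z - b' = ((x - b') - (c - b)) - ((b + (x - c)) - z) := by abel
          rw [e, hbz, hb'e, sub_self, sub_self, sub_zero]
        exact hzb ▸ hb'
      · intro b hb
        have h1 : x - b ∈ {x} - B := (memS x _).mpr ⟨b, hb, rfl⟩
        rw [hBB, memS] at h1
        obtain ⟨b', hb', he⟩ := h1
        rw [memBg]
        refine ⟨b', hb', ?_⟩
        rw [← sub_eq_zero]
        have e : b' + (x - c) - b = (x - b) - (c - b') := by abel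
        rw [e, ← he, sub_self]
end

section
/- Let G be a finite abelian group of odd order with a 3-coloring of its elements having color classes A, B, C which contains no rainbow 3-term arithmetic progression (no triple (x,y,z) with x + z = 2y whose members have pairwise distinct colors). Then for any two distinct color classes X, Y ∈ {A, B, C}, |X + Y| ≤ |X| + |Y|. -/
open Pointwise

/-- A 3-coloring with classes `A`, `B`, `C` is rainbow-free if no 3-term
arithmetic progression `(x, y, z)` (i.e. `x + z = 2 • y`) has its members in
three pairwise distinct color classes. -/
def RainbowFree {G : Type*} [AddCommGroup G] (A B C : Set G) : Prop :=
  ∀ x y z : G, x + z = 2 • y →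
    ¬ ((x ∈ A ∧ y ∈ B ∧ z ∈ C) ∨ (x ∈ A ∧ y ∈ C ∧ z ∈ B) ∨
       (x ∈ B ∧ y ∈ A ∧ z ∈ C) ∨ (x ∈ B ∧ y ∈ C ∧ z ∈ A) ∨
       (x ∈ C ∧ y ∈ A ∧ z ∈ B) ∨ (x ∈ C ∧ y ∈ B ∧ z ∈ A))

lemma key_sumset {G : Type*} [AddCommGroup G] [Fintype G]
    (hodd : Odd (Fintype.card G)) (X Y Z : Set G)
    (hcov : ∀ g : G, g ∈ X ∨ g ∈ Y ∨ g ∈ Z)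
    (h : ∀ x y z : G, x + z = 2 • y → x ∈ X → z ∈ Y → y ∉ Z) :
    (X + Y).ncard ≤ X.ncard + Y.ncard := by
  have hinj : Function.Injective (fun g : G => 2 • g) := by
    intro a b hab
    simp only at hab
    have h2 : 2 • (a - b) = 0 := by rw [smul_sub, hab, sub_self]
    have hd : addOrderOf (a - b) ∣ 2 := addOrderOf_dvd_of_nsmul_eq_zero h2
    rcases (Nat.dvd_prime Nat.prime_two).mp hd with h1 | h1
    · have : a - b = 0 := AddMonoid.addOrderOf_eq_one_iff.mp h1
      exact sub_eq_zero.mp this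
    · exfalso
      have hc : addOrderOf (a - b) ∣ Fintype.card G := addOrderOf_dvd_card
      rw [h1] at hc
      exact (Nat.not_even_iff_odd.mpr hodd) (even_iff_two_dvd.mpr hc)
  have hsurj : Function.Surjective (fun g : G => 2 • g) :=
    (Finite.injective_iff_surjective).mp hinj
  have hsub : X + Y ⊆ (fun g : G => 2 • g) '' (X ∪ Y) := by
    rintro s hs
    rcases Set.mem_add.mp hs with ⟨a, ha, b, hb, rfl⟩
    obtain ⟨y, hy⟩ := hsurj (a + b)
    have hyZ : y ∉ Z := h a y b hy.symm ha hb
    have : y ∈ X ∪ Y := by rcases hcov y with h' | h' | h' <;> first | exact Or.inl h' | exact Or.inr h' | exact absurd h' hyZ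
    exact ⟨y, this, hy⟩
  calc (X + Y).ncard ≤ ((fun g : G => 2 • g) '' (X ∪ Y)).ncard :=
        Set.ncard_le_ncard hsub (Set.toFinite _)
    _ = (X ∪ Y).ncard := Set.ncard_image_of_injective _ hinj
    _ ≤ X.ncard + Y.ncard := Set.ncard_union_le X Y

theorem sumset_small_of_rainbowFree {G : Type*} [AddCommGroup G] [Fintype G]
    (hodd : Odd (Fintype.card G)) (A B C : Set G)
    (hcover : A ∪ B ∪ C = Set.univ)
    (hAB : Disjoint A B) (hAC : Disjoint A C) (hBC : Disjoint B C)
    (hrf : RainbowFree A B C) :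
    ∀ X Y : Set G, X ∈ ({A, B, C} : Set (Set G)) → Y ∈ ({A, B, C} : Set (Set G)) →
      X ≠ Y → (X + Y).ncard ≤ X.ncard + Y.ncard := by
  have hcov : ∀ g : G, g ∈ A ∨ g ∈ B ∨ g ∈ C := by
    intro g
    have := Set.mem_univ g
    rw [← hcover] at this
    simpa [Set.mem_union, or_assoc] using this
  have key : ∀ X Y Z : Set G, (∀ g : G, g ∈ X ∨ g ∈ Y ∨ g ∈ Z) →
      (∀ x y z : G, x + z = 2 • y → x ∈ X → z ∈ Y → y ∉ Z) →
      (X + Y).ncard ≤ X.ncard + Y.ncard := fun X Y Z h1 h2 => key_sumset hodd X Y Z h1 h2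
  intro X Y hX hY hne
  simp only [Set.mem_insert_iff, Set.mem_singleton_iff] at hX hY
  rcases hX with rfl | rfl | rfl <;> rcases hY with rfl | rfl | rfl
  · exact absurd rfl hne
  · exact key X Y C (fun g => by have := hcov g; tauto) (fun x y z hxz hx hz hy =>
      hrf x y z hxz (Or.inr (Or.inl ⟨hx, hy, hz⟩)))
  · exact key X Y B (fun g => by have := hcov g; tauto) (fun x y z hxz hx hz hy =>
      hrf x y z hxz (Or.inl ⟨hx, hy, hz⟩))
  · exact key X Y C (fun g => by have := hcov g; tauto) (fun x y z hxz hx hz hy =>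
      hrf x y z hxz (Or.inr (Or.inr (Or.inr (Or.inl ⟨hx, hy, hz⟩)))))
  · exact absurd rfl hne
  · exact key X Y A (fun g => by have := hcov g; tauto) (fun x y z hxz hx hz hy =>
      hrf x y z hxz (Or.inr (Or.inr (Or.inl ⟨hx, hy, hz⟩))))
  · exact key X Y B (fun g => by have := hcov g; tauto) (fun x y z hxz hx hz hy =>
      hrf x y z hxz (Or.inr (Or.inr (Or.inr (Or.inr (Or.inr ⟨hx, hy, hz⟩))))))
  · exact key X Y A (fun g => by have := hcov g; tauto) (fun x y z hxz hx hz hy =>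
      hrf x y z hxz (Or.inr (Or.inr (Or.inr (Or.inr (Or.inl ⟨hx, hy, hz⟩))))))
  · exact absurd rfl hne
end

section
/- Let G be a finite abelian group of odd order with a rainbow-free 3-coloring with color classes A, B, C. Let H be a subgroup of G and let X, Y, Z be H-cosets with X + Y = 2·Z (as cosets, i.e., their images in G/H satisfy x̄ + ȳ = 2z̄). If X ∩ A, Y ∩ B, and Z ∩ C are all nonempty, then |X ∩ A| + |Y ∩ B| ≤ |H|, |X ∩ A| + |Z ∩ C| ≤ |H|, and |Y ∩ B| + |Z ∩ C| ≤ |H|. -/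
open Pointwise

theorem three_cosets_lemma {G : Type*} [AddCommGroup G] [Fintype G]
    (hodd : Odd (Fintype.card G)) (A B C : Set G)
    (hcover : A ∪ B ∪ C = Set.univ)
    (hAB : Disjoint A B) (hAC : Disjoint A C) (hBC : Disjoint B C)
    (hrf : RainbowFree A B C)
    (H : AddSubgroup G) (x y z : G)
    (hap : x + y - 2 • z ∈ H)
    (hXA : (({x} + (H : Set G)) ∩ A).Nonempty)
    (hYB : (({y} + (H : Set G)) ∩ B).Nonempty)
    (hZC : (({z} + (H : Set G)) ∩ C).Nonempty) :
    (({x} + (H : Set G)) ∩ A).ncard + (({y} + (H : Set G)) ∩ B).ncard ≤ Nat.card H ∧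
    (({x} + (H : Set G)) ∩ A).ncard + (({z} + (H : Set G)) ∩ C).ncard ≤ Nat.card H ∧
    (({y} + (H : Set G)) ∩ B).ncard + (({z} + (H : Set G)) ∩ C).ncard ≤ Nat.card H := by
  classical
  obtain ⟨m, hm⟩ := hodd
  -- halving
  have hsmul : ∀ g : G, Fintype.card G • g = 0 := fun g => card_nsmul_eq_zero
  set e : G → G := fun g => (m + 1) • g with he
  have htwo : ∀ g : G, 2 • e g = g := by
    intro g
    have : 2 • e g = (Fintype.card G) • g + g := by
      rw [he]; simp only [← smul_smul]
      rw [smul_smul, hm]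
      rw [show 2 * (m+1) = (2*m+1) + 1 by ring, add_smul, one_smul]
    rw [this, hsmul, zero_add]
  have heinj : Function.Injective e := by
    intro a b hab
    have := congrArg (2 • ·) hab
    simpa [htwo] using this
  -- membership in cosets
  have hmem : ∀ (w g : G), g ∈ ({w} + (H : Set G)) ↔ g - w ∈ H := by
    intro w g
    constructor
    · rintro ⟨a, ha, b, hb, rfl⟩
      simp only [Set.mem_singleton_iff] at ha
      subst ha; simpa using hb
    · intro hg
      exact ⟨w, rfl, g - w, hg, by show w + (g - w) = g; abel⟩
  -- 2 • w ∈ H → w ∈ H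
  have hhalf : ∀ w : G, 2 • w ∈ H → w ∈ H := by
    intro w hw
    have : w = (m + 1) • (2 • w) := by
      rw [smul_smul, show (m+1)*2 = (2*m+1)+1 by ring, add_smul, one_smul, ← hm,
        hsmul, zero_add]
    rw [this]
    exact AddSubgroup.nsmul_mem H hw ((m:ℕ)+1)
  -- cardinality of cosets
  have hcard : ∀ w : G, ({w} + (H : Set G)).ncard = Nat.card H := by
    intro w
    rw [Set.singleton_add]
    rw [Set.ncard_image_of_injective _ (add_right_injective w)]
    rw [← Nat.card_coe_set_eq]
    rfl
  have hfin : ∀ s : Set G, s.Finite := fun s => s.toFinite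
  obtain ⟨a₀, ha₀X, ha₀A⟩ := hXA
  obtain ⟨b₀, hb₀Y, hb₀B⟩ := hYB
  obtain ⟨c₀, hc₀Z, hc₀C⟩ := hZC
  rw [hmem] at ha₀X hb₀Y hc₀Z
  -- Inequality 1: reflect X∩A through c₀ into Y \ B
  have h1 : (({x} + (H : Set G)) ∩ A).ncard + (({y} + (H : Set G)) ∩ B).ncard
      ≤ Nat.card H := by
    have hmaps : ∀ a ∈ ({x} + (H : Set G)) ∩ A,
        (2 • c₀ - a) ∈ ({y} + (H : Set G)) \ B := by
      rintro a ⟨haX, haA⟩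
      rw [hmem] at haX
      constructor
      · rw [hmem]
        have : 2 • c₀ - a - y = 2 • (c₀ - z) - (a - x) - (x + y - 2 • z) := by
          abel
        rw [this]
        exact H.sub_mem (H.sub_mem (H.nsmul_mem hc₀Z 2) haX) hap
      · intro hB
        exact hrf a c₀ (2 • c₀ - a) (by abel)
          (Or.inr (Or.inl ⟨haA, hc₀C, hB⟩))
    have hinjOn : Set.InjOn (fun a => 2 • c₀ - a) (({x} + (H : Set G)) ∩ A) := by
      intro a _ b _ hab
      simp only at hab
      have : a = 2 • c₀ - (2 • c₀ - a) := by abel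
      rw [this, hab]; abel
    have := Set.ncard_le_ncard_of_injOn _ hmaps hinjOn (hfin _)
    have hsplit := Set.ncard_inter_add_ncard_diff_eq_ncard
      ({y} + (H : Set G)) B (hfin _)
    have := hcard y
    omega
  -- common map for inequalities 2 and 3
  have hmapgen : ∀ a b : G, a ∈ ({x} + (H : Set G)) → b ∈ ({y} + (H : Set G)) →
      a ∈ A → b ∈ B → e (a + b) ∈ ({z} + (H : Set G)) \ C := by
    intro a b haX hbY haA hbB
    rw [hmem] at haX hbY
    constructor
    · rw [hmem]
      apply hhalf
      have : 2 • (e (a + b) - z) = (a - x) + (b - y) + (x + y - 2 • z) := by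
        rw [smul_sub, htwo]; abel
      rw [this]
      exact H.add_mem (H.add_mem haX hbY) hap
    · intro hC
      exact hrf a (e (a + b)) b (by rw [htwo])
        (Or.inr (Or.inl ⟨haA, hC, hbB⟩))
  -- Inequality 2: map X∩A into Z \ C via a ↦ e (a + b₀)
  have h2 : (({x} + (H : Set G)) ∩ A).ncard + (({z} + (H : Set G)) ∩ C).ncard
      ≤ Nat.card H := by
    have hmaps : ∀ a ∈ ({x} + (H : Set G)) ∩ A,
        e (a + b₀) ∈ ({z} + (H : Set G)) \ C := by
      rintro a ⟨haX, haA⟩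
      exact hmapgen a b₀ haX ((hmem y b₀).mpr hb₀Y) haA hb₀B
    have hinjOn : Set.InjOn (fun a => e (a + b₀)) (({x} + (H : Set G)) ∩ A) := by
      intro a _ b _ hab
      have := heinj hab
      exact add_right_cancel this
    have := Set.ncard_le_ncard_of_injOn _ hmaps hinjOn (hfin _)
    have hsplit := Set.ncard_inter_add_ncard_diff_eq_ncard
      ({z} + (H : Set G)) C (hfin _)
    have := hcard z
    omega
  -- Inequality 3: map Y∩B into Z \ C via b ↦ e (a₀ + b)
  have h3 : (({y} + (H : Set G)) ∩ B).ncard + (({z} + (H : Set G)) ∩ C).ncard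
      ≤ Nat.card H := by
    have hmaps : ∀ b ∈ ({y} + (H : Set G)) ∩ B,
        e (a₀ + b) ∈ ({z} + (H : Set G)) \ C := by
      rintro b ⟨hbY, hbB⟩
      exact hmapgen a₀ b ((hmem x a₀).mpr ha₀X) hbY ha₀A hbB
    have hinjOn : Set.InjOn (fun b => e (a₀ + b)) (({y} + (H : Set G)) ∩ B) := by
      intro a _ b _ hab
      have := heinj hab
      exact add_left_cancel this
    have := Set.ncard_le_ncard_of_injOn _ hmaps hinjOn (hfin _)
    have hsplit := Set.ncard_inter_add_ncard_diff_eq_ncard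
      ({z} + (H : Set G)) C (hfin _)
    have := hcard z
    omega
  exact ⟨h1, h2, h3⟩
end

section
/- Let G be a finite abelian group of odd order with a rainbow-free 3-coloring with color classes A, B, C, let H be a subgroup of G, and let X, Y, Z be H-cosets in arithmetic progression (X/H + Y/H = 2·(Z/H)). If X ∩ A, Y ∩ B, Z ∩ C are all nonempty, then none of X, Y, Z is monochromatic (i.e., each of X, Y, Z meets at least two color classes). -/
open Pointwise

lemma mem_singleton_add_coset {G : Type*} [AddCommGroup G] (H : AddSubgroup G) (x s : G) :
    s ∈ ({x} + (H : Set G)) ↔ s - x ∈ H := by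
  constructor
  · rintro ⟨a, ha, b, hb, rfl⟩
    simp only [Set.mem_singleton_iff] at ha
    subst ha
    simpa using hb
  · intro h
    exact ⟨x, rfl, s - x, h, by simp⟩

theorem three_cosets_not_monochromatic {G : Type*} [AddCommGroup G] [Fintype G]
    (hodd : Odd (Fintype.card G)) (A B C : Set G)
    (hcover : A ∪ B ∪ C = Set.univ)
    (hAB : Disjoint A B) (hAC : Disjoint A C) (hBC : Disjoint B C)
    (hrf : RainbowFree A B C)
    (H : AddSubgroup G) (x y z : G)
    (hap : x + y - 2 • z ∈ H)
    (hXA : (({x} + (H : Set G)) ∩ A).Nonempty)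
    (hYB : (({y} + (H : Set G)) ∩ B).Nonempty)
    (hZC : (({z} + (H : Set G)) ∩ C).Nonempty) :
    (¬ (({x} + (H : Set G)) ⊆ A ∨ ({x} + (H : Set G)) ⊆ B ∨ ({x} + (H : Set G)) ⊆ C)) ∧
    (¬ (({y} + (H : Set G)) ⊆ A ∨ ({y} + (H : Set G)) ⊆ B ∨ ({y} + (H : Set G)) ⊆ C)) ∧
    (¬ (({z} + (H : Set G)) ⊆ A ∨ ({z} + (H : Set G)) ⊆ B ∨ ({z} + (H : Set G)) ⊆ C)) := by
  obtain ⟨a, haX, haA⟩ := hXA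
  obtain ⟨b, hbY, hbB⟩ := hYB
  obtain ⟨c, hcZ, hcC⟩ := hZC
  rw [mem_singleton_add_coset] at haX hbY hcZ
  obtain ⟨m, hm⟩ := hodd
  have h2k : ∀ g : G, (2 * (m + 1)) • g = g := by
    intro g
    have h0 : Fintype.card G • g = 0 := card_nsmul_eq_zero
    have : (2 * (m + 1)) = Fintype.card G + 1 := by omega
    rw [this, add_nsmul, h0, one_nsmul, zero_add]
  refine ⟨?_, ?_, ?_⟩
  · rintro (hX | hX | hX)
    · -- X ⊆ A : build rainbow (2•c - b, c, b)
      have ha' : (2 • c - b) - x ∈ H := by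
        have := H.sub_mem (H.sub_mem (H.nsmul_mem hcZ 2) hbY) hap
        have e : 2 • (c - z) - (b - y) - (x + y - 2 • z) = (2 • c - b) - x := by
          simp only [smul_sub]; abel
        rwa [e] at this
      have haA' : (2 • c - b) ∈ A := hX ((mem_singleton_add_coset H x _).2 ha')
      exact hrf (2 • c - b) c b (by abel) (Or.inr (Or.inl ⟨haA', hcC, hbB⟩))
    · exact Set.disjoint_left.mp hAB haA (hX ((mem_singleton_add_coset H x a).2 haX))
    · exact Set.disjoint_left.mp hAC haA (hX ((mem_singleton_add_coset H x a).2 haX))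
  · rintro (hY | hY | hY)
    · exact Set.disjoint_left.mp hAB (hY ((mem_singleton_add_coset H y b).2 hbY)) hbB
    · -- Y ⊆ B : build rainbow (a, c, 2•c - a)
      have hb' : (2 • c - a) - y ∈ H := by
        have := H.sub_mem (H.sub_mem (H.nsmul_mem hcZ 2) haX) hap
        have e : 2 • (c - z) - (a - x) - (x + y - 2 • z) = (2 • c - a) - y := by
          simp only [smul_sub]; abel
        rwa [e] at this
      have hbB' : (2 • c - a) ∈ B := hY ((mem_singleton_add_coset H y _).2 hb')
      exact hrf a c (2 • c - a) (by abel) (Or.inr (Or.inl ⟨haA, hcC, hbB'⟩))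
    · exact Set.disjoint_left.mp hBC hbB (hY ((mem_singleton_add_coset H y b).2 hbY))
  · rintro (hZ | hZ | hZ)
    · exact Set.disjoint_left.mp hAC (hZ ((mem_singleton_add_coset H z c).2 hcZ)) hcC
    · exact Set.disjoint_left.mp hBC (hZ ((mem_singleton_add_coset H z c).2 hcZ)) hcC
    · -- Z ⊆ C : build rainbow (a, (m+1)•(a+b), b)
      set k := m + 1 with hk
      have hsum : a + b = ((a - x) + (b - y) + (x + y - 2 • z)) + 2 • z := by abel
      have hmemh : (a - x) + (b - y) + (x + y - 2 • z) ∈ H :=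
        H.add_mem (H.add_mem haX hbY) hap
      have hc' : k • (a + b) - z ∈ H := by
        have hkz : k • ((2:ℕ) • z) = (2 * k) • z := by rw [smul_smul, Nat.mul_comm]
        have e : k • (a + b) - z = k • ((a - x) + (b - y) + (x + y - 2 • z)) +
            ((2 * k) • z - z) := by
          rw [hsum, smul_add, hkz]; abel
        rw [e, h2k z]
        simpa using H.nsmul_mem hmemh k
      have hcC' : k • (a + b) ∈ C := hZ ((mem_singleton_add_coset H z _).2 hc')
      have hap2 : a + b = 2 • (k • (a + b)) := by
        rw [smul_smul, h2k]
      exact hrf a (k • (a + b)) b hap2 (Or.inr (Or.inl ⟨haA, hcC', hbB⟩))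
end

section
/- Let G be a finite abelian group of odd order with a rainbow-free 3-coloring with nonempty color classes A, B, C such that A = {0}. Then 2·B = B = −B and 2·C = C = −C. -/
open Pointwise

theorem structure_of_singleton_class {G : Type*} [AddCommGroup G] [Fintype G]
    (hodd : Odd (Fintype.card G)) (A B C : Set G)
    (hcover : A ∪ B ∪ C = Set.univ)
    (hAB : Disjoint A B) (hAC : Disjoint A C) (hBC : Disjoint B C)
    (hBne : B.Nonempty) (hCne : C.Nonempty)
    (hrf : RainbowFree A B C) (hA : A = {0}) :
    (fun t : G => 2 • t) '' B = B ∧ -B = B ∧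
    (fun t : G => 2 • t) '' C = C ∧ -C = C := by
  subst hA
  have h0A : (0 : G) ∈ ({0} : Set G) := rfl
  -- 2 • y = 0 → y = 0
  have h2zero : ∀ y : G, 2 • y = 0 → y = 0 := by
    intro y hy
    have h1 := addOrderOf_dvd_of_nsmul_eq_zero hy
    have h2 := addOrderOf_dvd_card (x := y)
    have hcop : Nat.Coprime 2 (Fintype.card G) :=
      Nat.coprime_two_left.mpr hodd
    have : addOrderOf y ∣ 1 := by
      have := Nat.dvd_gcd h1 h2
      rwa [Nat.Coprime.gcd_eq_one hcop] at this
    have := Nat.dvd_one.mp this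
    exact AddMonoid.addOrderOf_eq_one_iff.mp this
  have hinj : Function.Injective (fun t : G => 2 • t) := by
    intro a b hab
    simp only at hab
    have : 2 • (a - b) = 0 := by
      rw [smul_sub, hab, sub_self]
    have := h2zero _ this
    exact sub_eq_zero.mp this
  have hsurj : Function.Surjective (fun t : G => 2 • t) :=
    Finite.injective_iff_surjective.mp hinj
  have hmem : ∀ g : G, g = 0 ∨ g ∈ B ∨ g ∈ C := by
    intro g
    have : g ∈ ({0} : Set G) ∪ B ∪ C := hcover ▸ Set.mem_univ g
    rcases this with (h | h) | h
    · exact Or.inl h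
    · exact Or.inr (Or.inl h)
    · exact Or.inr (Or.inr h)
  have hBne0 : ∀ x ∈ B, x ≠ 0 := by
    intro x hx h; subst h; exact Set.disjoint_left.mp hAB h0A hx
  have hCne0 : ∀ x ∈ C, x ≠ 0 := by
    intro x hx h; subst h; exact Set.disjoint_left.mp hAC h0A hx
  -- step lemmas
  have stepB : ∀ y ∈ B, 2 • y ∈ B := by
    intro y hy
    rcases hmem (2 • y) with h | h | h
    · exact absurd (h2zero y h) (hBne0 y hy)
    · exact h
    · exact absurd (Or.inl ⟨h0A, hy, h⟩) (hrf 0 y (2 • y) (zero_add _))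
  have stepC : ∀ y ∈ C, 2 • y ∈ C := by
    intro y hy
    rcases hmem (2 • y) with h | h | h
    · exact absurd (h2zero y h) (hCne0 y hy)
    · exact absurd (Or.inr (Or.inl ⟨h0A, hy, h⟩)) (hrf 0 y (2 • y) (zero_add _))
    · exact h
  have halfB : ∀ b ∈ B, ∀ y, 2 • y = b → y ∈ B := by
    intro b hb y hy
    rcases hmem y with h | h | h
    · exact absurd (by rw [← hy, h, smul_zero]) (hBne0 b hb)
    · exact h
    · exact absurd (Or.inr (Or.inl ⟨h0A, h, hy ▸ hb⟩)) (hrf 0 y (2 • y) (zero_add _))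
  have halfC : ∀ c ∈ C, ∀ y, 2 • y = c → y ∈ C := by
    intro c hc y hy
    rcases hmem y with h | h | h
    · exact absurd (by rw [← hy, h, smul_zero]) (hCne0 c hc)
    · exact absurd (Or.inl ⟨h0A, h, hy ▸ hc⟩) (hrf 0 y (2 • y) (zero_add _))
    · exact h
  have negB : ∀ x ∈ B, -x ∈ B := by
    intro x hx
    rcases hmem (-x) with h | h | h
    · exact absurd (neg_eq_zero.mp h) (hBne0 x hx)
    · exact h
    · exact absurd (Or.inr (Or.inr (Or.inl ⟨hx, h0A, h⟩)))
        (hrf x 0 (-x) (by simp))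
  have negC : ∀ x ∈ C, -x ∈ C := by
    intro x hx
    rcases hmem (-x) with h | h | h
    · exact absurd (neg_eq_zero.mp h) (hCne0 x hx)
    · exact absurd (Or.inr (Or.inr (Or.inr (Or.inr (Or.inl ⟨hx, h0A, h⟩)))))
        (hrf x 0 (-x) (by simp))
    · exact h
  refine ⟨?_, ?_, ?_, ?_⟩
  · apply Set.Subset.antisymm
    · rintro _ ⟨y, hy, rfl⟩; exact stepB y hy
    · intro b hb
      obtain ⟨y, hy⟩ := hsurj b
      exact ⟨y, halfB b hb y hy, hy⟩
  · apply Set.Subset.antisymm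
    · rintro x hx
      have := negB (-x) (Set.mem_neg.mp hx)
      rwa [neg_neg] at this
    · intro x hx
      exact Set.mem_neg.mpr (by simpa using negB x hx)
  · apply Set.Subset.antisymm
    · rintro _ ⟨y, hy, rfl⟩; exact stepC y hy
    · intro c hc
      obtain ⟨y, hy⟩ := hsurj c
      exact ⟨y, halfC c hc y hy, hy⟩
  · apply Set.Subset.antisymm
    · rintro x hx
      have := negC (-x) (Set.mem_neg.mp hx)
      rwa [neg_neg] at this
    · intro x hx
      exact Set.mem_neg.mpr (by simpa using negC x hx)
end

section
/- Let G be a finite abelian group of odd order and let {A, B, C} be a partition of G into three sets. Suppose there is a proper subgroup H of G such that: (i) A ⊆ H and the coloring induced on H (by classes A ∩ H, B ∩ H, C ∩ H) is rainbow-free; (ii) B \ H and C \ H are H-periodic (unions of H-cosets); (iii) with B̃ = B \ H and C̃ = C \ H, one has B̃ = −B̃ = 2·B̃ and C̃ = −C̃ = 2·C̃. Then the coloring {A, B, C} of G is rainbow-free. -/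
open Pointwise

/-- Case `x ∈ A`, `y ∈ B`, `z ∈ C`. -/
private lemma aux1 {G : Type*} [AddCommGroup G] (A B C : Set G)
    (H : AddSubgroup G) (hAH : A ⊆ (H : Set G)) (hBC : Disjoint B C)
    (hind : ∀ x y z : G, x ∈ H → y ∈ H → z ∈ H → x + z = 2 • y →
      ¬ (x ∈ A ∧ y ∈ B ∧ z ∈ C))
    (hBper : (B \ (H : Set G)) + (H : Set G) = B \ (H : Set G))
    (hB2 : (fun t : G => 2 • t) '' (B \ (H : Set G)) = B \ (H : Set G))
    (x y z : G) (heq : x + z = 2 • y) (hx : x ∈ A) (hy : y ∈ B) (hz : z ∈ C) :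
    False := by
  have hxH : x ∈ H := hAH hx
  have hzeq : z = 2 • y + (-x) := by rw [← heq]; abel
  by_cases hyH : y ∈ H
  · have hzH : z ∈ H := by
      rw [hzeq]
      exact H.add_mem (by rw [two_nsmul]; exact H.add_mem hyH hyH) (H.neg_mem hxH)
    exact hind x y z hxH hyH hzH heq ⟨hx, hy, hz⟩
  · have h2y : 2 • y ∈ B \ (H : Set G) := by
      rw [← hB2]; exact ⟨y, ⟨hy, hyH⟩, rfl⟩
    have hzB : z ∈ B \ (H : Set G) := by
      rw [← hBper, hzeq]
      exact Set.add_mem_add h2y (H.neg_mem hxH)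
    exact Set.disjoint_left.mp hBC hzB.1 hz

/-- Case `x ∈ B`, `y ∈ A`, `z ∈ C`. -/
private lemma aux2 {G : Type*} [AddCommGroup G] (A B C : Set G)
    (H : AddSubgroup G) (hAH : A ⊆ (H : Set G)) (hBC : Disjoint B C)
    (hind : ∀ x y z : G, x ∈ H → y ∈ H → z ∈ H → x + z = 2 • y →
      ¬ (x ∈ B ∧ y ∈ A ∧ z ∈ C))
    (hBper : (B \ (H : Set G)) + (H : Set G) = B \ (H : Set G))
    (hBsym : -(B \ (H : Set G)) = B \ (H : Set G))
    (x y z : G) (heq : x + z = 2 • y) (hx : x ∈ B) (hy : y ∈ A) (hz : z ∈ C) :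
    False := by
  have hyH : y ∈ H := hAH hy
  have h2y : (2 : ℕ) • y ∈ H := by rw [two_nsmul]; exact H.add_mem hyH hyH
  have hzeq : z = (-x) + 2 • y := by rw [← heq]; abel
  by_cases hxH : x ∈ H
  · have hzH : z ∈ H := by rw [hzeq]; exact H.add_mem (H.neg_mem hxH) h2y
    exact hind x y z hxH hyH hzH heq ⟨hx, hy, hz⟩
  · have hnx : -x ∈ B \ (H : Set G) := by
      rw [← hBsym]; exact Set.neg_mem_neg.mpr ⟨hx, hxH⟩
    have hzB : z ∈ B \ (H : Set G) := by
      rw [← hBper, hzeq]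
      exact Set.add_mem_add hnx h2y
    exact Set.disjoint_left.mp hBC hzB.1 hz

theorem rainbowFree_of_structured {G : Type*} [AddCommGroup G] [Fintype G]
    (hodd : Odd (Fintype.card G)) (A B C : Set G)
    (hcover : A ∪ B ∪ C = Set.univ)
    (hAB : Disjoint A B) (hAC : Disjoint A C) (hBC : Disjoint B C)
    (H : AddSubgroup G) (hH : H ≠ ⊤)
    (hAH : A ⊆ (H : Set G))
    (hind : ∀ x y z : G, x ∈ H → y ∈ H → z ∈ H → x + z = 2 • y →
      ¬ ((x ∈ A ∧ y ∈ B ∧ z ∈ C) ∨ (x ∈ A ∧ y ∈ C ∧ z ∈ B) ∨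
         (x ∈ B ∧ y ∈ A ∧ z ∈ C) ∨ (x ∈ B ∧ y ∈ C ∧ z ∈ A) ∨
         (x ∈ C ∧ y ∈ A ∧ z ∈ B) ∨ (x ∈ C ∧ y ∈ B ∧ z ∈ A)))
    (hBper : (B \ (H : Set G)) + (H : Set G) = B \ (H : Set G))
    (hCper : (C \ (H : Set G)) + (H : Set G) = C \ (H : Set G))
    (hBsym : -(B \ (H : Set G)) = B \ (H : Set G))
    (hB2 : (fun t : G => 2 • t) '' (B \ (H : Set G)) = B \ (H : Set G))
    (hCsym : -(C \ (H : Set G)) = C \ (H : Set G))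
    (hC2 : (fun t : G => 2 • t) '' (C \ (H : Set G)) = C \ (H : Set G)) :
    RainbowFree A B C := by
  intro x y z heq hmem
  have heq' : z + x = 2 • y := by rw [← heq]; abel
  rcases hmem with ⟨hx, hy, hz⟩ | ⟨hx, hy, hz⟩ | ⟨hx, hy, hz⟩ | ⟨hx, hy, hz⟩ |
    ⟨hx, hy, hz⟩ | ⟨hx, hy, hz⟩
  · exact aux1 A B C H hAH hBC
      (fun a b c ha hb hc he hm => hind a b c ha hb hc he (Or.inl hm))
      hBper hB2 x y z heq hx hy hz
  · exact aux1 A C B H hAH hBC.symm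
      (fun a b c ha hb hc he hm => hind a b c ha hb hc he (Or.inr (Or.inl hm)))
      hCper hC2 x y z heq hx hy hz
  · exact aux2 A B C H hAH hBC
      (fun a b c ha hb hc he hm =>
        hind a b c ha hb hc he (Or.inr (Or.inr (Or.inl hm))))
      hBper hBsym x y z heq hx hy hz
  · exact aux1 A C B H hAH hBC.symm
      (fun a b c ha hb hc he hm =>
        hind a b c ha hb hc he
          (Or.inr (Or.inl hm)))
      hCper hC2 z y x heq' hz hy hx
  · exact aux2 A C B H hAH hBC.symm
      (fun a b c ha hb hc he hm =>
        hind a b c ha hb hc he (Or.inr (Or.inr (Or.inr (Or.inr (Or.inl hm))))))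
      hCper hCsym x y z heq hx hy hz
  · exact aux1 A B C H hAH hBC
      (fun a b c ha hb hc he hm =>
        hind a b c ha hb hc he
          (Or.inl hm))
      hBper hB2 z y x heq' hz hy hx
end

section
/- Let G be a finite abelian group of odd order with a rainbow-free 3-coloring with nonempty color classes A, B, C, and suppose |A| = 2, say A = {0, a}. Then a generates a proper subgroup of G (i.e., the cyclic subgroup ⟨a⟩ is not all of G). -/
open Pointwise

theorem generator_proper_of_card_two_class {G : Type*} [AddCommGroup G] [Fintype G]
    (hodd : Odd (Fintype.card G)) (A B C : Set G)
    (hcover : A ∪ B ∪ C = Set.univ)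
    (hAB : Disjoint A B) (hAC : Disjoint A C) (hBC : Disjoint B C)
    (hBne : B.Nonempty) (hCne : C.Nonempty)
    (hrf : RainbowFree A B C)
    (a : G) (ha : a ≠ 0) (hA : A = {0, a}) :
    AddSubgroup.zmultiples a ≠ ⊤ := by
  classical
  intro htop
  obtain ⟨b, hb⟩ := hBne
  obtain ⟨c, hc⟩ := hCne
  have hbA : b ∉ A := fun h => Set.disjoint_left.mp hAB h hb
  have hcA : c ∉ A := fun h => Set.disjoint_left.mp hAC h hc
  have hcB : c ∉ B := fun h => Set.disjoint_left.mp hBC h hc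
  have h0A : (0 : G) ∈ A := by rw [hA]; left; rfl
  have haA : a ∈ A := by rw [hA]; right; rfl
  set n := addOrderOf a with hn
  have hncard : n = Fintype.card G := by
    have := addOrderOf_eq_card_of_forall_mem_zmultiples
      (fun x : G => htop ▸ AddSubgroup.mem_top x)
    rwa [Nat.card_eq_fintype_card] at this
  have hnodd : Odd n := hncard ▸ hodd
  -- the four elements 0, a, b, c are distinct, hence n ≥ 5
  have hb' : b ≠ 0 ∧ b ≠ a := by
    have := hbA; rw [hA] at this; simpa using this
  have hc' : c ≠ 0 ∧ c ≠ a := by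
    have := hcA; rw [hA] at this; simpa using this
  have hbc : b ≠ c := fun h => hcB (h ▸ hb)
  have h4 : ({0, a, b, c} : Finset G).card = 4 := by
    rw [Finset.card_insert_of_notMem (by simp [ha.symm, hb'.1.symm, hc'.1.symm]),
      Finset.card_insert_of_notMem (by simp [hb'.2.symm, hc'.2.symm]),
      Finset.card_insert_of_notMem (by simp [hbc]), Finset.card_singleton]
  have hn4 : 4 ≤ n := by
    rw [hncard, ← h4]; exact Finset.card_le_univ _
  have hn5 : 5 ≤ n := by
    obtain ⟨m, hm⟩ := hnodd; omega
  -- basic membership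
  have hmem : ∀ x : G, x ∉ A → x ∈ B ∨ x ∈ C := by
    intro x hx
    have hx' : x ∈ A ∪ B ∪ C := hcover ▸ Set.mem_univ x
    rcases hx' with (h | h) | h
    · exact absurd h hx
    · exact Or.inl h
    · exact Or.inr h
  have key : ∀ x y z : G, x + z = 2 • y → y ∈ A → x ∉ A → z ∉ A → (x ∈ B ↔ z ∈ B) := by
    intro x y z hxyz hy hx hz
    have h := hrf x y z hxyz
    constructor
    · intro hxB
      rcases hmem z hz with h1 | h1
      · exact h1
      · exact absurd (Or.inr (Or.inr (Or.inl ⟨hxB, hy, h1⟩))) h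
    · intro hzB
      rcases hmem x hx with h1 | h1
      · exact h1
      · exact absurd (Or.inr (Or.inr (Or.inr (Or.inr (Or.inl ⟨h1, hy, hzB⟩))))) h
  have key2 : ∀ x y z : G, x + z = 2 • y → x ∈ A → y ∉ A → z ∉ A → (y ∈ B ↔ z ∈ B) := by
    intro x y z hxyz hx hy hz
    have h := hrf x y z hxyz
    constructor
    · intro hyB
      rcases hmem z hz with h1 | h1
      · exact h1
      · exact absurd (Or.inl ⟨hx, hyB, h1⟩) h
    · intro hzB
      rcases hmem y hy with h1 | h1
      · exact h1
      · exact absurd (Or.inr (Or.inl ⟨hx, h1, hzB⟩)) h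
  have hksmul : ∀ k : ℕ, 0 < k → k < n → k • a ≠ 0 := by
    intro k hk1 hk2 h
    have hd : n ∣ k := addOrderOf_dvd_of_nsmul_eq_zero h
    have := Nat.le_of_dvd hk1 hd
    omega
  have notA : ∀ k : ℕ, 2 ≤ k → k ≤ n - 1 → k • a ∉ A := by
    intro k hk1 hk2 hk
    rw [hA] at hk
    rcases hk with h | h
    · exact hksmul k (by omega) (by omega) h
    · have h2 : (k - 1 + 1) • a = a := by rwa [show k - 1 + 1 = k by omega]
      rw [add_nsmul, one_nsmul] at h2
      have h3 : (k - 1) • a = 0 := by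
        have := add_right_cancel (b := a) (a := (k - 1) • a) (c := 0)
        simpa using h2
      exact hksmul (k - 1) (by omega) (by omega) h3
  have step : ∀ k : ℕ, 2 ≤ k → k + 2 ≤ n - 1 → (k • a ∈ B ↔ (k + 2) • a ∈ B) := by
    intro k hk1 hk2
    have h1 : k • a ∉ A := notA k hk1 (by omega)
    have h2 : (k + 2) • a ∉ A := notA (k + 2) (by omega) hk2
    have h3 : -(k • a) ∉ A := by
      rw [hA]; rintro (h | h)
      · exact hksmul k (by omega) (by omega) (neg_eq_zero.mp h)
      · have hka : k • a = -a := neg_eq_iff_eq_neg.mp h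
        have h4 : (k + 1) • a = 0 := by
          rw [add_nsmul, one_nsmul, hka, neg_add_cancel]
        exact hksmul (k + 1) (by omega) (by omega) h4
    have e1 : k • a ∈ B ↔ -(k • a) ∈ B :=
      key (k • a) 0 (-(k • a)) (by simp) h0A h1 h3
    have e2 : -(k • a) ∈ B ↔ (k + 2) • a ∈ B :=
      key (-(k • a)) a ((k + 2) • a) (by rw [add_nsmul, neg_add_cancel_left]) haA h3 h2
    exact e1.trans e2
  have even_chain : ∀ j : ℕ, 1 ≤ j → 2 * j ≤ n - 1 → ((2 * j) • a ∈ B ↔ 2 • a ∈ B) := by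
    intro j
    induction j with
    | zero => omega
    | succ j ih =>
      intro h1 h2
      rcases Nat.lt_or_ge j 1 with hj | hj
      · interval_cases j
        norm_num
      · have hs := step (2 * j) (by omega) (by omega)
        have ih' := ih (by omega) (by omega)
        rw [show 2 * (j + 1) = 2 * j + 2 by ring]
        exact (hs.symm).trans ih'
  have odd_chain : ∀ j : ℕ, 1 ≤ j → 2 * j + 1 ≤ n - 1 → ((2 * j + 1) • a ∈ B ↔ 3 • a ∈ B) := by
    intro j
    induction j with
    | zero => omega
    | succ j ih =>
      intro h1 h2
      rcases Nat.lt_or_ge j 1 with hj | hj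
      · interval_cases j
        norm_num
      · have hs := step (2 * j + 1) (by omega) (by omega)
        have ih' := ih (by omega) (by omega)
        rw [show 2 * (j + 1) + 1 = 2 * j + 1 + 2 by ring]
        exact (hs.symm).trans ih'
  have link : 2 • a ∈ B ↔ 3 • a ∈ B := by
    refine key2 a (2 • a) (3 • a) ?_ haA (notA 2 (by omega) (by omega)) (notA 3 (by omega) (by omega))
    abel
  have rep : ∀ x : G, ∃ k, k < n ∧ k • a = x := by
    intro x
    have hx : x ∈ AddSubgroup.zmultiples a := htop ▸ AddSubgroup.mem_top x
    rw [mem_zmultiples_iff_mem_range_addOrderOf] at hx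
    simp only [Finset.mem_image, Finset.mem_range] at hx
    obtain ⟨k, hk, hkx⟩ := hx
    exact ⟨k, hk, hkx⟩
  have main : ∀ x : G, x ∉ A → (x ∈ B ↔ 2 • a ∈ B) := by
    intro x hx
    obtain ⟨k, hk, rfl⟩ := rep x
    have hk0 : k ≠ 0 := by rintro rfl; rw [zero_nsmul] at hx; exact hx h0A
    have hk1 : k ≠ 1 := by rintro rfl; rw [one_nsmul] at hx; exact hx haA
    rcases Nat.even_or_odd k with ⟨j, hj⟩ | ⟨j, hj⟩
    · rw [show k = 2 * j by omega]
      exact even_chain j (by omega) (by omega)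
    · rw [show k = 2 * j + 1 by omega]
      exact (odd_chain j (by omega) (by omega)).trans link.symm
  have h2aB : 2 • a ∈ B := (main b hbA).mp hb
  exact hcB ((main c hcA).mpr h2aB)
end

section
/- Let n be odd and let {A, B, C} be a rainbow-free 3-coloring of Z/nZ with nonempty color classes such that A = {0, 1, 2} and B = {x, x+2, x+3} for some x. Then a contradiction follows; i.e., no such rainbow-free coloring exists. -/
open Pointwise

theorem no_rainbowFree_with_explicit_progressions (n : ℕ) (hn : Odd n)
    (A B C : Set (ZMod n))
    (hcover : A ∪ B ∪ C = Set.univ)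
    (hAB : Disjoint A B) (hAC : Disjoint A C) (hBC : Disjoint B C)
    (hCne : C.Nonempty)
    (hrf : RainbowFree A B C)
    (x : ZMod n)
    (hA : A = {0, 1, 2}) (hB : B = {x, x + 2, x + 3})
    (hx : x ∉ ({0, 1, 2, -3, -2, -1} : Set (ZMod n))) :
    False := by
  -- First dispatch small n
  rcases Nat.lt_or_ge n 7 with h7 | h7
  · interval_cases n
    · exact absurd hn (by decide)
    · clear hB
      simp only [Set.mem_insert_iff, Set.mem_singleton_iff, not_or] at hx
      revert x
      decide
    · exact absurd hn (by decide)
    · clear hB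
      simp only [Set.mem_insert_iff, Set.mem_singleton_iff, not_or] at hx
      revert x
      decide
    · exact absurd hn (by decide)
    · clear hB
      simp only [Set.mem_insert_iff, Set.mem_singleton_iff, not_or] at hx
      revert x
      decide
    · exact absurd hn (by decide)
  · have hn0 : NeZero n := ⟨by omega⟩
    have hcast : ∀ k : ℕ, 0 < k → k < 7 → (k : ZMod n) ≠ 0 := by
      intro k hk1 hk2 h
      have hd := (ZMod.natCast_eq_zero_iff k n).mp h
      have := Nat.le_of_dvd hk1 hd
      omega
    have h2u : IsUnit (2 : ZMod n) := by
      have hc : Nat.Coprime 2 n := Nat.coprime_two_left.mpr hn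
      simpa using (ZMod.isUnit_iff_coprime 2 n).mpr hc
    have hcancel : ∀ a b : ZMod n, 2 * a = 2 * b → a = b := fun a b h =>
      h2u.mul_left_cancel h
    simp only [Set.mem_insert_iff, Set.mem_singleton_iff, not_or] at hx
    obtain ⟨hx0, hx1, hx2, hxm3, hxm2, hxm1⟩ := hx
    have hC : ∀ z : ZMod n, z ∉ A → z ∉ B → z ∈ C := by
      intro z hzA hzB
      have hz : z ∈ A ∪ B ∪ C := hcover ▸ Set.mem_univ z
      rcases hz with (h | h) | h
      · exact absurd h hzA
      · exact absurd h hzB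
      · exact h
    have main : (2 * x + 2 : ZMod n) = 1 := by
      by_contra hne
      have hnA : (2 * x + 2 : ZMod n) ∉ A := by
        rw [hA]
        simp only [Set.mem_insert_iff, Set.mem_singleton_iff, not_or]
        refine ⟨fun h => hxm1 (hcancel x (-1) (by linear_combination h)), hne,
          fun h => hx0 (hcancel x 0 (by linear_combination h))⟩
      have hnB : (2 * x + 2 : ZMod n) ∉ B := by
        rw [hB]
        simp only [Set.mem_insert_iff, Set.mem_singleton_iff, not_or]
        exact ⟨fun h => hxm2 (by linear_combination h),
          fun h => hx0 (by linear_combination h),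
          fun h => hx1 (by linear_combination h)⟩
      exact hrf 2 (x + 2) (2 * x + 2) (by rw [two_nsmul]; ring)
        (Or.inl ⟨by rw [hA]; simp, by rw [hB]; simp, hC _ hnA hnB⟩)
    have hm1A : (-1 : ZMod n) ∉ A := by
      rw [hA]
      simp only [Set.mem_insert_iff, Set.mem_singleton_iff, not_or]
      refine ⟨fun h => hcast 1 (by norm_num) (by norm_num) ?_,
        fun h => hcast 2 (by norm_num) (by norm_num) ?_,
        fun h => hcast 3 (by norm_num) (by norm_num) ?_⟩
      · push_cast
        linear_combination -h
      · push_cast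
        linear_combination -h
      · push_cast
        linear_combination -h
    by_cases hmB : (-1 : ZMod n) ∈ B
    · rw [hB] at hmB
      simp only [Set.mem_insert_iff, Set.mem_singleton_iff] at hmB
      rcases hmB with h | h | h
      · exact hxm1 (by linear_combination -h)
      · exact hxm3 (by linear_combination -h)
      · -- -1 = x + 3, so x = -4, and 2x + 2 = 1 forces 7 = 0, i.e. n = 7
        have h7 : ((7 : ℕ) : ZMod n) = 0 := by
          push_cast
          linear_combination -main - 2 * h
        have hdvd := (ZMod.natCast_eq_zero_iff 7 n).mp h7
        have hle := Nat.le_of_dvd (by norm_num) hdvd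
        have hn7 : n = 7 := by omega
        subst hn7
        have hx4 : x = -4 := by linear_combination -h
        subst hx4
        refine hrf 2 4 6 (by rw [two_nsmul]; decide) (Or.inr (Or.inl ⟨?_, ?_, ?_⟩))
        · rw [hA]
          simp only [Set.mem_insert_iff, Set.mem_singleton_iff]
          decide
        · refine hC 4 ?_ ?_
          · rw [hA]
            simp only [Set.mem_insert_iff, Set.mem_singleton_iff]
            decide
          · rw [hB]
            simp only [Set.mem_insert_iff, Set.mem_singleton_iff]
            decide
        · rw [hB]
          simp only [Set.mem_insert_iff, Set.mem_singleton_iff]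
          decide
    · exact hrf 0 x (-1) (by rw [two_nsmul]; linear_combination -main)
        (Or.inl ⟨by rw [hA]; simp, by rw [hB]; simp, hC (-1) hm1A hmB⟩)
end

section
/- Let G be a cyclic group of order 2^m · l with l > 1 odd and m ≥ 1, and let {A, B, C} be a rainbow-free 3-coloring of G with nonempty color classes. Let P₀ = 2·G = {2g : g ∈ G} (the index-2 subgroup of G) and let P₁ be its nontrivial coset. Then neither P₀ nor P₁ is monochromatic. -/
open Pointwise

/-- Key lemma: if `Y ∪ Z` is contained in a coset of `2·G` and every midpoint of a
`Y`-`Z` pair avoids `X`, with `Y`, `Z` nonempty, we get a contradiction. -/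
lemma key_coset_lemma (m l n : ℕ) (hm : 1 ≤ m) (hl : Odd l) (hn : n = 2 ^ m * l)
    (X Y Z : Set (ZMod n))
    (hcov : ∀ g : ZMod n, g ∈ X ∨ g ∈ Y ∨ g ∈ Z)
    (hYne : Y.Nonempty) (hZne : Z.Nonempty)
    (hrf : ∀ x y z : ZMod n, x + z = 2 • y → ¬(x ∈ Y ∧ y ∈ X ∧ z ∈ Z))
    (t : ZMod n) (ht : ∀ s ∈ Y ∪ Z, ∃ u : ZMod n, s = t + 2 * u) : False := by
  obtain ⟨k, rfl⟩ : ∃ k, m = k + 1 := ⟨m - 1, (Nat.succ_pred_eq_of_pos hm).symm⟩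
  -- midpoints of Y-Z pairs lie in Y ∪ Z
  have hmid : ∀ b ∈ Y, ∀ c ∈ Z, ∀ y : ZMod n, b + c = y + y → y ∈ Y ∪ Z := by
    intro b hb c hc y hy
    rcases hcov y with hx | h | h
    · exact absurd ⟨hb, hx, hc⟩ (hrf b y c (by rw [two_nsmul]; exact hy))
    · exact Or.inl h
    · exact Or.inr h
  -- Y ∪ Z is contained in a coset of 2^(k+1) · G for every k
  have main : ∀ k : ℕ, ∃ t' : ZMod n,
      ∀ s ∈ Y ∪ Z, ∃ u : ZMod n, s = t' + 2 ^ (k + 1) * u := by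
    intro k
    induction k with
    | zero => exact ⟨t, by simpa using ht⟩
    | succ k ih =>
      obtain ⟨t', ht'⟩ := ih
      obtain ⟨b₀, hb₀⟩ := hYne
      obtain ⟨c₀, hc₀⟩ := hZne
      have hsum : ∀ b ∈ Y, ∀ c ∈ Z,
          ∃ v : ZMod n, b + c = t' + t' + 2 ^ (k + 1 + 1) * v := by
        intro b hb c hc
        obtain ⟨u, hu⟩ := ht' b (Or.inl hb)
        obtain ⟨u', hu'⟩ := ht' c (Or.inr hc)
        have hbc : b + c = (t' + 2 ^ k * (u + u')) + (t' + 2 ^ k * (u + u')) := by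
          rw [hu, hu']; ring
        obtain ⟨v, hv⟩ := ht' _ (hmid b hb c hc _ hbc)
        exact ⟨v, by rw [hbc, hv]; ring⟩
      obtain ⟨v₀, hv₀⟩ := hsum b₀ hb₀ c₀ hc₀
      obtain ⟨u₀, hu₀⟩ := ht' b₀ (Or.inl hb₀)
      refine ⟨b₀, ?_⟩
      rintro s (hs | hs)
      · obtain ⟨v₁, hv₁⟩ := hsum s hs c₀ hc₀
        exact ⟨v₁ - v₀, by linear_combination hv₁ - hv₀⟩
      · obtain ⟨w, hw⟩ := hsum b₀ hb₀ s hs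
        exact ⟨w - u₀, by linear_combination hw - 2 * hu₀⟩
  obtain ⟨tm, htm⟩ := main k
  obtain ⟨b₀, hb₀⟩ := hYne
  obtain ⟨c₀, hc₀⟩ := hZne
  obtain ⟨u₀, hu₀⟩ := htm b₀ (Or.inl hb₀)
  obtain ⟨u₁, hu₁⟩ := htm c₀ (Or.inr hc₀)
  set y₀ : ZMod n := tm + 2 ^ k * (u₀ + u₁) with hy₀
  have hbc : b₀ + c₀ = y₀ + y₀ := by
    rw [hu₀, hu₁, hy₀]; ring
  set c2 : ZMod n := ((2 ^ k * l : ℕ) : ZMod n) with hc2def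
  have hc2 : c2 + c2 = 0 := by
    have hnat : 2 ^ k * l + 2 ^ k * l = n := by
      rw [hn]; ring
    rw [hc2def, ← Nat.cast_add, hnat, ZMod.natCast_self]
  have hbc' : b₀ + c₀ = (y₀ + c2) + (y₀ + c2) := by
    rw [hbc]; linear_combination -hc2
  obtain ⟨a, ha⟩ := htm y₀ (hmid b₀ hb₀ c₀ hc₀ y₀ hbc)
  obtain ⟨a', ha'⟩ := htm (y₀ + c2) (hmid b₀ hb₀ c₀ hc₀ _ hbc')
  have hkey : c2 = (2 : ZMod n) ^ (k + 1) * (a' - a) := by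
    linear_combination ha' - ha
  have hkey2 : ((2 ^ k * l : ℕ) : ZMod n) = ((2 ^ (k + 1) : ℕ) : ZMod n) * (a' - a) := by
    rw [← hc2def, hkey]; push_cast; ring
  have hdvd : (2 : ℕ) ^ (k + 1) ∣ n := hn ▸ dvd_mul_right _ _
  have h3 := congrArg (ZMod.castHom hdvd (ZMod (2 ^ (k + 1)))) hkey2
  simp only [map_mul, map_natCast, ZMod.natCast_self, zero_mul] at h3
  have hdv : (2 : ℕ) ^ (k + 1) ∣ 2 ^ k * l := (ZMod.natCast_eq_zero_iff _ _).mp h3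
  obtain ⟨q, hq⟩ := hdv
  have hcancel : l = 2 * q := by
    have h4 : 2 ^ k * l = 2 ^ k * (2 * q) := by
      rw [hq]; ring
    exact Nat.eq_of_mul_eq_mul_left (Nat.pow_pos (by norm_num)) h4
  obtain ⟨j, hj⟩ := hl
  omega

theorem index_two_cosets_not_monochromatic (m l : ℕ) (hm : 1 ≤ m) (hl : Odd l)
    (hl1 : 1 < l) (n : ℕ) (hn : n = 2 ^ m * l)
    (A B C : Set (ZMod n))
    (hcover : A ∪ B ∪ C = Set.univ)
    (hAB : Disjoint A B) (hAC : Disjoint A C) (hBC : Disjoint B C)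
    (hAne : A.Nonempty) (hBne : B.Nonempty) (hCne : C.Nonempty)
    (hrf : RainbowFree A B C) :
    (¬ ((fun g : ZMod n => g + g) '' Set.univ ⊆ A ∨
        (fun g : ZMod n => g + g) '' Set.univ ⊆ B ∨
        (fun g : ZMod n => g + g) '' Set.univ ⊆ C)) ∧
    (¬ (((fun g : ZMod n => g + g) '' Set.univ)ᶜ ⊆ A ∨
        ((fun g : ZMod n => g + g) '' Set.univ)ᶜ ⊆ B ∨
        ((fun g : ZMod n => g + g) '' Set.univ)ᶜ ⊆ C)) := by
  haveI : NeZero n := ⟨by rw [hn]; positivity⟩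
  have hcov : ∀ g : ZMod n, g ∈ A ∨ g ∈ B ∨ g ∈ C := by
    intro g
    have hg : g ∈ A ∪ B ∪ C := hcover ▸ Set.mem_univ g
    simpa [Set.mem_union, or_assoc] using hg
  set P : Set (ZMod n) := (fun g : ZMod n => g + g) '' Set.univ with hP
  have hoddco : ∀ s : ZMod n, s ∉ P → ∃ u : ZMod n, s = 1 + 2 * u := by
    intro s hs
    have hv : ((s.val : ℕ) : ZMod n) = s := ZMod.natCast_rightInverse s
    rcases Nat.even_or_odd s.val with ⟨c, hc⟩ | ⟨c, hc⟩
    · exfalso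
      apply hs
      refine ⟨(c : ZMod n), Set.mem_univ _, ?_⟩
      show (c : ZMod n) + (c : ZMod n) = s
      rw [← hv, hc]; push_cast; ring
    · refine ⟨(c : ZMod n), ?_⟩
      rw [← hv, hc]; push_cast; ring
  have hevenco : ∀ s : ZMod n, s ∈ P → ∃ u : ZMod n, s = 0 + 2 * u := by
    rintro s ⟨g, -, hg⟩
    exact ⟨g, by rw [← hg]; ring⟩
  constructor
  · rintro (h | h | h)
    · refine key_coset_lemma m l n hm hl hn A B C hcov hBne hCne
        (fun x y z hxz hmem => hrf x y z hxz (Or.inr (Or.inr (Or.inl hmem)))) 1 ?_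
      rintro s (hs | hs)
      · exact hoddco s fun hsP => Set.disjoint_left.mp hAB (h hsP) hs
      · exact hoddco s fun hsP => Set.disjoint_left.mp hAC (h hsP) hs
    · refine key_coset_lemma m l n hm hl hn B A C (fun g => by rcases hcov g with h1|h1|h1 <;> tauto)
        hAne hCne
        (fun x y z hxz hmem => hrf x y z hxz (Or.inl hmem)) 1 ?_
      rintro s (hs | hs)
      · exact hoddco s fun hsP => Set.disjoint_left.mp hAB hs (h hsP)
      · exact hoddco s fun hsP => Set.disjoint_right.mp hBC hs (h hsP)
    · refine key_coset_lemma m l n hm hl hn C A B (fun g => by rcases hcov g with h1|h1|h1 <;> tauto)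
        hAne hBne
        (fun x y z hxz hmem => hrf x y z hxz (Or.inr (Or.inl hmem))) 1 ?_
      rintro s (hs | hs)
      · exact hoddco s fun hsP => Set.disjoint_left.mp hAC hs (h hsP)
      · exact hoddco s fun hsP => Set.disjoint_right.mp hBC (h hsP) hs
  · rintro (h | h | h)
    · refine key_coset_lemma m l n hm hl hn A B C hcov hBne hCne
        (fun x y z hxz hmem => hrf x y z hxz (Or.inr (Or.inr (Or.inl hmem)))) 0 ?_
      rintro s (hs | hs)
      · exact hevenco s (not_not.mp fun hsP => Set.disjoint_left.mp hAB (h hsP) hs)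
      · exact hevenco s (not_not.mp fun hsP => Set.disjoint_left.mp hAC (h hsP) hs)
    · refine key_coset_lemma m l n hm hl hn B A C (fun g => by rcases hcov g with h1|h1|h1 <;> tauto)
        hAne hCne
        (fun x y z hxz hmem => hrf x y z hxz (Or.inl hmem)) 0 ?_
      rintro s (hs | hs)
      · exact hevenco s (not_not.mp fun hsP => Set.disjoint_left.mp hAB hs (h hsP))
      · exact hevenco s (not_not.mp fun hsP => Set.disjoint_right.mp hBC hs (h hsP))
    · refine key_coset_lemma m l n hm hl hn C A B (fun g => by rcases hcov g with h1|h1|h1 <;> tauto)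
        hAne hBne
        (fun x y z hxz hmem => hrf x y z hxz (Or.inr (Or.inl hmem))) 0 ?_
      rintro s (hs | hs)
      · exact hevenco s (not_not.mp fun hsP => Set.disjoint_left.mp hAC hs (h hsP))
      · exact hevenco s (not_not.mp fun hsP => Set.disjoint_right.mp hBC (h hsP) hs)
end

section
/- Let G be a finite abelian group of odd order with a rainbow-free 3-coloring {A, B, C}, and suppose B is a translate of A with |A| = |B| = 3, i.e., B = A + x with A = {0, a, a'}. Then −x ∈ B, and it follows that A = {−2x, 0, 2x} and B = {−x, x, 3x}, so both A and B are arithmetic progressions with the same common difference; in particular |A + B| ≤ 5 < |A| + |B|. -/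
open Pointwise

theorem translate_class_structure {G : Type*} [AddCommGroup G] [Fintype G]
    (hodd : Odd (Fintype.card G)) (A B C : Set G)
    (hcover : A ∪ B ∪ C = Set.univ)
    (hAB : Disjoint A B) (hAC : Disjoint A C) (hBC : Disjoint B C)
    (hrf : RainbowFree A B C)
    (a a' x : G) (ha : a ≠ 0) (ha' : a' ≠ 0) (haa : a ≠ a') (hx : x ≠ 0)
    (hA : A = {0, a, a'}) (hB : B = {x} + A) :
    -x ∈ B ∧ A = {-(2 • x), 0, 2 • x} ∧ B = {-x, x, 3 • x} ∧
    (A + B).ncard ≤ 5 ∧ 5 < A.ncard + B.ncard := by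
  -- doubling is injective in odd order
  have h2 : ∀ g : G, 2 • g = 0 → g = 0 := by
    intro g hg
    have h1 : addOrderOf g ∣ 2 := addOrderOf_dvd_of_nsmul_eq_zero hg
    have h3 : addOrderOf g ∣ Fintype.card G := addOrderOf_dvd_card
    have hcop : Nat.Coprime 2 (Fintype.card G) := hodd.coprime_two_left
    have h4 : addOrderOf g ∣ 1 := hcop ▸ Nat.dvd_gcd h1 h3
    exact AddMonoid.addOrderOf_eq_one_iff.mp (Nat.dvd_one.mp h4)
  have h2x0 : 2 • x ≠ 0 := fun h => hx (h2 x h)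
  have h4x0 : (2 : ℕ) • (2 • x) ≠ 0 := fun h => h2x0 (h2 _ h)
  -- handy nsmul expansions
  have t2 : (2 : ℕ) • x = x + x := two_nsmul x
  have t3 : (3 : ℕ) • x = x + x + x := by
    rw [show (3 : ℕ) = 2 + 1 by norm_num, succ_nsmul, two_nsmul]
  have t5 : (5 : ℕ) • x = x + x + x + x + x := by
    rw [show (5 : ℕ) = 2 + 2 + 1 by norm_num, succ_nsmul, add_nsmul, two_nsmul]
    abel
  have hB' : B = {x, x + a, x + a'} := by
    rw [hB, hA]
    simp [Set.singleton_add, Set.image_insert_eq, Set.image_singleton]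
  have h0A : (0 : G) ∈ A := by rw [hA]; simp
  have haA : a ∈ A := by rw [hA]; simp
  have ha'A : a' ∈ A := by rw [hA]; simp
  have hxB : x ∈ B := by rw [hB']; simp
  have hmemC : ∀ g : G, g ∉ A → g ∉ B → g ∈ C := by
    intro g hga hgb
    have : g ∈ A ∪ B ∪ C := hcover.symm ▸ Set.mem_univ g
    rcases this with (h | h) | h
    · exact absurd h hga
    · exact absurd h hgb
    · exact h
  have hnotAB : ∀ g : G, g ∈ A → g ∈ B → False := fun g hga hgb =>
    Set.disjoint_left.mp hAB hga hgb
  -- Step 1 : -x ∈ B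
  have hnegxB : -x ∈ B := by
    by_contra hnx
    have hnxA : -x ∉ A := by
      intro h
      rw [hA] at h
      simp only [Set.mem_insert_iff, Set.mem_singleton_iff] at h
      rcases h with h | h | h
      · exact hx (by simpa using congrArg Neg.neg h)
      · exact hnotAB 0 h0A (by rw [hB']; right; left; rw [← h]; simp)
      · exact hnotAB 0 h0A (by rw [hB']; right; right; rw [← h]; simp)
    have hnxC : -x ∈ C := hmemC _ hnxA hnx
    exact hrf x 0 (-x) (by simp) (Or.inr (Or.inr (Or.inl ⟨hxB, h0A, hnxC⟩)))
  -- Step 3 : 2 • x ∈ A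
  have h2xA : 2 • x ∈ A := by
    by_contra h2xnA
    have h2xB : 2 • x ∉ B := by
      intro h
      rw [hB'] at h
      simp only [Set.mem_insert_iff, Set.mem_singleton_iff] at h
      rcases h with h | h | h
      · rw [two_nsmul, add_eq_left] at h; exact hx h
      · have hax : a = x := by rw [two_nsmul] at h; exact add_left_cancel h.symm
        exact hnotAB x (hax ▸ haA) hxB
      · have hax : a' = x := by rw [two_nsmul] at h; exact add_left_cancel h.symm
        exact hnotAB x (hax ▸ ha'A) hxB
    exact hrf 0 x (2 • x) (by simp) (Or.inl ⟨h0A, hxB, hmemC _ h2xnA h2xB⟩)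
  -- Step 2 : one of a, a' is -2x
  have hstep2 : a = -(2 • x) ∨ a' = -(2 • x) := by
    rw [hB'] at hnegxB
    have hmem := hnegxB
    simp only [Set.mem_insert_iff, Set.mem_singleton_iff] at hmem
    rcases hmem with h | h | h
    · exfalso
      apply h2x0
      rw [t2]
      nth_rewrite 1 [← h]
      exact neg_add_cancel x
    · left
      rw [eq_comm, neg_eq_iff_add_eq_zero, two_nsmul, add_assoc]
      exact neg_eq_iff_add_eq_zero.mp h
    · right
      rw [eq_comm, neg_eq_iff_add_eq_zero, two_nsmul, add_assoc]
      exact neg_eq_iff_add_eq_zero.mp h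
  -- and one of a, a' is 2x
  have hstep3 : a = 2 • x ∨ a' = 2 • x := by
    rw [hA] at h2xA
    simp only [Set.mem_insert_iff, Set.mem_singleton_iff] at h2xA
    rcases h2xA with h | h | h
    · exact absurd h h2x0
    · exact Or.inl h.symm
    · exact Or.inr h.symm
  have hne : (-(2 • x) : G) ≠ 2 • x := by
    intro h
    apply h4x0
    rw [two_nsmul (2 • x)]
    rw [neg_eq_iff_add_eq_zero] at h
    exact h
  have hkey : (a = -(2 • x) ∧ a' = 2 • x) ∨ (a = 2 • x ∧ a' = -(2 • x)) := by
    rcases hstep2 with h | h <;> rcases hstep3 with h' | h'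
    · exact absurd (h.symm.trans h') hne
    · exact Or.inl ⟨h, h'⟩
    · exact Or.inr ⟨h', h⟩
    · exact absurd (h.symm.trans h') hne
  have hA2 : A = {-(2 • x), 0, 2 • x} := by
    rcases hkey with ⟨h1, h2'⟩ | ⟨h1, h2'⟩
    · rw [hA, h1, h2']
      exact Set.insert_comm 0 (-(2 • x)) {2 • x}
    · rw [hA, h1, h2', Set.pair_comm (2 • x) (-(2 • x))]
      exact Set.insert_comm 0 (-(2 • x)) {2 • x}
  have hx2 : x + -(2 • x) = -x := by rw [two_nsmul]; abel
  have hx3 : x + 2 • x = 3 • x := by rw [t2, t3]; abel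
  have hB2 : B = {-x, x, 3 • x} := by
    rcases hkey with ⟨h1, h2'⟩ | ⟨h1, h2'⟩
    · rw [hB', h1, h2', hx2, hx3]
      exact Set.insert_comm x (-x) {3 • x}
    · rw [hB', h1, h2', hx2, hx3, Set.pair_comm (3 • x) (-x)]
      exact Set.insert_comm x (-x) {3 • x}
  refine ⟨hnegxB, hA2, hB2, ?_, ?_⟩
  · -- |A + B| ≤ 5
    have e1 : -(2 • x) + -x = -(3 • x) := by rw [t2, t3]; try abel
    have e2 : -(2 • x) + x = -x := by rw [t2]; try abel
    have e3 : -(2 • x) + 3 • x = x := by rw [t2, t3]; try abel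
    have e7 : 2 • x + -x = x := by rw [t2]; try abel
    have e8 : 2 • x + x = 3 • x := by rw [t2, t3]; try abel
    have e9 : 2 • x + 3 • x = 5 • x := by rw [t2, t3, t5]; try abel
    have hsub : A + B ⊆ ({-(3 • x), -x, x, 3 • x, 5 • x} : Set G) := by
      rw [hA2, hB2]
      intro g hg
      rw [Set.mem_add] at hg
      obtain ⟨p, hp, q, hq, rfl⟩ := hg
      simp only [Set.mem_insert_iff, Set.mem_singleton_iff] at hp hq ⊢
      rcases hp with rfl | rfl | rfl <;> rcases hq with rfl | rfl | rfl
      · exact Or.inl e1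
      · exact Or.inr (Or.inl e2)
      · exact Or.inr (Or.inr (Or.inl e3))
      · exact Or.inr (Or.inl (zero_add _))
      · exact Or.inr (Or.inr (Or.inl (zero_add _)))
      · exact Or.inr (Or.inr (Or.inr (Or.inl (zero_add _))))
      · exact Or.inr (Or.inr (Or.inl e7))
      · exact Or.inr (Or.inr (Or.inr (Or.inl e8)))
      · exact Or.inr (Or.inr (Or.inr (Or.inr e9)))
    calc (A + B).ncard ≤ ({-(3 • x), -x, x, 3 • x, 5 • x} : Set G).ncard :=
          Set.ncard_le_ncard hsub (Set.toFinite _)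
      _ ≤ 5 := by
          apply le_trans (Set.ncard_insert_le _ _)
          apply Nat.succ_le_succ
          apply le_trans (Set.ncard_insert_le _ _)
          apply Nat.succ_le_succ
          apply le_trans (Set.ncard_insert_le _ _)
          apply Nat.succ_le_succ
          apply le_trans (Set.ncard_insert_le _ _)
          apply Nat.succ_le_succ
          exact le_of_eq (Set.ncard_singleton _)
  · -- 5 < |A| + |B|
    have hcA : A.ncard = 3 := by
      rw [hA]
      exact Set.ncard_eq_three.mpr ⟨0, a, a', ha.symm, ha'.symm, haa, rfl⟩
    have hcB : B.ncard = 3 := by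
      rw [hB2]
      refine Set.ncard_eq_three.mpr ⟨-x, x, 3 • x, ?_, ?_, ?_, rfl⟩
      · intro h
        apply h2x0
        rw [two_nsmul]
        exact neg_eq_iff_add_eq_zero.mp h
      · intro h
        apply h4x0
        rw [two_nsmul (2 • x), t2]
        have := neg_eq_iff_add_eq_zero.mp h
        rw [t3] at this
        calc x + x + (x + x) = x + (x + x + x) := by abel
          _ = 0 := this
      · intro h
        apply h2x0
        rw [two_nsmul]
        have : x + x + x = x := by rw [← t3, ← h]
        have h' : x + x = 0 := by
          have := congrArg (· + (-x)) this
          simpa [add_assoc] using this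
        exact h'
    rw [hcA, hcB]; norm_num
end

section
/- Let G be a cyclic group and {A, B, C} a rainbow-free 3-coloring of G with A = {0} and B, C nonempty, and suppose |B + C| = |B| + |C| − 1 (so G \ (B + C) = {0, x} for some x ≠ 0). Then −B = B, −C = C, and ({0, x} + B) ⊆ G \ C, hence |{0, x} + B| ≤ |B| + 1. -/
open Pointwise

theorem structure_of_near_full_sumset {G : Type*} [AddCommGroup G] [Fintype G]
    [IsAddCyclic G] (A B C : Set G)
    (hcover : A ∪ B ∪ C = Set.univ)
    (hAB : Disjoint A B) (hAC : Disjoint A C) (hBC : Disjoint B C)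
    (hBne : B.Nonempty) (hCne : C.Nonempty)
    (hrf : RainbowFree A B C) (hA : A = {0})
    (hcard : (B + C).ncard = B.ncard + C.ncard - 1)
    (x : G) (hx : x ≠ 0)
    (hmiss : Set.univ \ (B + C) = {0, x}) :
    -B = B ∧ -C = C ∧ (({0, x} : Set G) + B) ⊆ Set.univ \ C ∧
    (({0, x} : Set G) + B).ncard ≤ B.ncard + 1 := by
  have h0A : (0 : G) ∈ A := by rw [hA]; rfl
  -- negation closure of B
  have hnegB : ∀ b ∈ B, -b ∈ B := by
    intro b hb
    by_contra hnb
    have hmem : -b ∈ A ∪ B ∪ C := by rw [hcover]; trivial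
    have hbC : -b ∈ C := by
      rcases hmem with (hh | hh) | hh
      · exfalso
        rw [hA, Set.mem_singleton_iff] at hh
        have : b = 0 := by simpa using congrArg Neg.neg hh
        exact Set.disjoint_left.mp hAB (this ▸ h0A) hb
      · exact absurd hh hnb
      · exact hh
    exact hrf b 0 (-b) (by simp) (Or.inr (Or.inr (Or.inl ⟨hb, h0A, hbC⟩)))
  have hnegC : ∀ c ∈ C, -c ∈ C := by
    intro c hc
    by_contra hnc
    have hmem : -c ∈ A ∪ B ∪ C := by rw [hcover]; trivial
    have hcB : -c ∈ B := by
      rcases hmem with (hh | hh) | hh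
      · exfalso
        rw [hA, Set.mem_singleton_iff] at hh
        have : c = 0 := by simpa using congrArg Neg.neg hh
        exact Set.disjoint_left.mp hAC (this ▸ h0A) hc
      · exact hh
      · exact absurd hh hnc
    exact hrf c 0 (-c) (by simp) (Or.inr (Or.inr (Or.inr (Or.inr (Or.inl ⟨hc, h0A, hcB⟩)))))
  have hB : -B = B := by
    ext a
    constructor
    · intro ha
      have := hnegB (-a) (by simpa using ha)
      simpa using this
    · intro ha
      simpa using hnegB a ha
  have hC : -C = C := by
    ext a
    constructor
    · intro ha
      have := hnegC (-a) (by simpa using ha)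
      simpa using this
    · intro ha
      simpa using hnegC a ha
  -- x is not in B + C
  have hxnot : x ∉ B + C := by
    have : x ∈ Set.univ \ (B + C) := by rw [hmiss]; right; rfl
    exact this.2
  -- subset claim
  have hsub : (({0, x} : Set G) + B) ⊆ Set.univ \ C := by
    rintro y hy
    obtain ⟨u, hu, b, hb, rfl⟩ := hy
    refine ⟨trivial, ?_⟩
    rcases hu with rfl | rfl
    · simpa using Set.disjoint_left.mp hBC hb
    · intro hxbC
      apply hxnot
      refine ⟨-b, hnegB b hb, u + b, hxbC, ?_⟩
      show -b + (u + b) = u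
      rw [add_comm u b]
      exact neg_add_cancel_left b u
  -- univ \ C = A ∪ B
  have hcompl : Set.univ \ C = A ∪ B := by
    ext g
    constructor
    · rintro ⟨-, hgC⟩
      have : g ∈ A ∪ B ∪ C := by rw [hcover]; trivial
      rcases this with hh | hh
      · exact hh
      · exact absurd hh hgC
    · rintro (hg | hg)
      · exact ⟨trivial, Set.disjoint_left.mp hAC hg⟩
      · exact ⟨trivial, Set.disjoint_left.mp hBC hg⟩
  have hcardc : (Set.univ \ C : Set G).ncard = B.ncard + 1 := by
    rw [hcompl, Set.ncard_union_eq hAB A.toFinite B.toFinite, hA]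
    simp [Nat.add_comm]
  refine ⟨hB, hC, hsub, ?_⟩
  calc (({0, x} : Set G) + B).ncard ≤ (Set.univ \ C : Set G).ncard :=
        Set.ncard_le_ncard hsub (Set.toFinite _)
    _ = B.ncard + 1 := hcardc
end

section
/- Let G be a finite abelian group of odd order n, with smallest prime factor of n in 𝒫₀ equal to p and smallest prime factor in 𝒫₁ equal to q, where 2p ≤ q. Choose a subgroup H of G of index p, a partition A ∪ B = H with |A| = ⌊n/(2p)⌋, and set C = G \ H. Then {A, B, C} is a rainbow-free 3-coloring of G whose smallest color class has size exactly ⌊n/(2p)⌋. -/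
open Pointwise

/-- `p ∈ 𝒫₀`: odd primes for which `2` has multiplicative order `p - 1`, or order
`(p-1)/2` with `(p-1)/2` odd. -/
def InP0 (p : ℕ) : Prop :=
  p.Prime ∧ Odd p ∧ (orderOf (2 : ZMod p) = p - 1 ∨
    (orderOf (2 : ZMod p) = (p - 1) / 2 ∧ Odd ((p - 1) / 2)))

/-- `p ∈ 𝒫₁`: the remaining odd primes. -/
def InP1 (p : ℕ) : Prop := p.Prime ∧ Odd p ∧ ¬ InP0 p

theorem extremal_rainbowFree_coloring {G : Type*} [AddCommGroup G] [Fintype G]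
    (hodd : Odd (Fintype.card G)) (p q : ℕ)
    (hp0 : InP0 p) (hpdvd : p ∣ Fintype.card G)
    (hpmin : ∀ r, InP0 r → r ∣ Fintype.card G → p ≤ r)
    (hq1 : InP1 q) (hqdvd : q ∣ Fintype.card G)
    (hqmin : ∀ r, InP1 r → r ∣ Fintype.card G → q ≤ r)
    (hpq : 2 * p ≤ q)
    (H : AddSubgroup G) (hHi : H.index = p)
    (A B C : Set G)
    (hAB : Disjoint A B) (hABH : A ∪ B = (H : Set G))
    (hC : C = Set.univ \ (H : Set G))
    (hAcard : A.ncard = Fintype.card G / (2 * p)) :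
    RainbowFree A B C ∧
    min (min A.ncard B.ncard) C.ncard = Fintype.card G / (2 * p) := by

  classical
  subst hC
  set n := Fintype.card G with hn
  have hAH : A ⊆ (H : Set G) := hABH ▸ Set.subset_union_left
  have hBH : B ⊆ (H : Set G) := hABH ▸ Set.subset_union_right
  -- membership lemma: 2 • y ∈ H → y ∈ H
  have hcard : ∀ g : G, n • g = 0 := fun g => by
    rw [hn]; exact card_nsmul_eq_zero
  have h2 : ∀ y : G, (2 : ℕ) • y ∈ H → y ∈ H := by
    intro y hy
    obtain ⟨k, hk⟩ := hodd
    have hyy : y = (k + 1) • ((2 : ℕ) • y) := by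
      rw [smul_smul]
      have : (k + 1) * 2 = n + 1 := by omega
      rw [this, add_nsmul, hcard, one_nsmul, zero_add]
    rw [hyy]
    exact H.nsmul_mem hy (k + 1)
  constructor
  · intro x y z hxyz hcases
    have key : ∀ a b c : G, a + c = 2 • b → a ∈ (H : Set G) → b ∈ (H : Set G) →
        c ∈ Set.univ \ (H : Set G) → False := by
      intro a b c habc ha hb hc
      have : c = 2 • b - a := by rw [← habc]; abel
      exact hc.2 (this ▸ H.sub_mem (H.nsmul_mem hb 2) ha)
    have key2 : ∀ a b c : G, a + c = 2 • b → a ∈ (H : Set G) → c ∈ (H : Set G) →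
        b ∈ Set.univ \ (H : Set G) → False := by
      intro a b c habc ha hc hb
      exact hb.2 (h2 b (habc ▸ H.add_mem ha hc))
    rcases hcases with ⟨hx, hy, hz⟩ | ⟨hx, hy, hz⟩ | ⟨hx, hy, hz⟩ | ⟨hx, hy, hz⟩ |
      ⟨hx, hy, hz⟩ | ⟨hx, hy, hz⟩
    · exact key x y z hxyz (hAH hx) (hBH hy) hz
    · exact key2 x y z hxyz (hAH hx) (hBH hz) hy
    · exact key x y z hxyz (hBH hx) (hAH hy) hz
    · exact key2 x y z hxyz (hBH hx) (hAH hz) hy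
    · have : z + x = 2 • y := by rw [← hxyz]; abel
      exact key z y x this (hBH hz) (hAH hy) hx
    · have : z + x = 2 • y := by rw [← hxyz]; abel
      exact key z y x this (hAH hz) (hBH hy) hx
  · -- cardinalities
    set m := n / p with hm
    have hpm : p * m = n := Nat.mul_div_cancel' hpdvd
    have h2' : Nat.card H = (H : Set G).ncard := by
      rw [← Nat.card_coe_set_eq]; rfl
    have h1 : p * (H : Set G).ncard = n := by
      rw [← hHi, ← h2', hn, ← Nat.card_eq_fintype_card]
      exact H.index_mul_card
    have hHcard : (H : Set G).ncard = m := by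
      rw [hm, ← h1, Nat.mul_div_cancel_left _ hp0.1.pos]
    have hsum : A.ncard + B.ncard = m := by
      rw [← Set.ncard_union_eq hAB A.toFinite B.toFinite, hABH, hHcard]
    have hCcard : (Set.univ \ (H : Set G)).ncard = n - m := by
      rw [Set.ncard_diff (Set.subset_univ _), Set.ncard_univ, Nat.card_eq_fintype_card, hHcard]
    have hdiv : n / (2 * p) = m / 2 := by
      rw [hm, Nat.div_div_eq_div_mul, Nat.mul_comm]
    have hp3 : 3 ≤ p := by
      obtain ⟨k, hk⟩ := hp0.2.1
      have := hp0.1.two_le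
      omega
    have h3m : 3 * m ≤ n := by
      calc 3 * m ≤ p * m := Nat.mul_le_mul_right m hp3
      _ = n := hpm
    rw [hCcard, hAcard, hdiv]
    omega
end

section
/- Let G be an abelian group of odd order and {A, B, C} a rainbow-free 3-coloring with all classes nonempty. If |A| = 1, say A = {0} after translation, then for every x ∈ B both −x ∈ B and 2x ∈ B, and similarly for C; hence 2·B = B = −B and 2·C = C = −C. -/
open Pointwise

theorem singleton_class_closure {G : Type*} [AddCommGroup G] [Fintype G]
    (hodd : Odd (Fintype.card G)) (A B C : Set G)
    (hcover : A ∪ B ∪ C = Set.univ)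
    (hAB : Disjoint A B) (hAC : Disjoint A C) (hBC : Disjoint B C)
    (hBne : B.Nonempty) (hCne : C.Nonempty)
    (hrf : RainbowFree A B C) (hA : A = {0}) :
    (∀ x ∈ B, -x ∈ B ∧ x + x ∈ B) ∧ (∀ x ∈ C, -x ∈ C ∧ x + x ∈ C) ∧
    (fun t : G => 2 • t) '' B = B ∧ -B = B ∧
    (fun t : G => 2 • t) '' C = C ∧ -C = C := by
  have h0A : (0 : G) ∈ A := by rw [hA]; rfl
  have h2z : ∀ z : G, 2 • z = 0 → z = 0 := by
    intro z hz
    have h1 : addOrderOf z ∣ 2 := addOrderOf_dvd_of_nsmul_eq_zero hz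
    have h2 : addOrderOf z ∣ Fintype.card G := addOrderOf_dvd_card
    rcases (Nat.dvd_prime Nat.prime_two).mp h1 with h | h
    · exact AddMonoid.addOrderOf_eq_one_iff.mp h
    · exfalso
      rw [h] at h2
      exact (Nat.not_even_iff_odd.mpr hodd) (even_iff_two_dvd.mpr h2)
  have hmem : ∀ x : G, x = 0 ∨ x ∈ B ∨ x ∈ C := by
    intro x
    have hx : x ∈ A ∪ B ∪ C := by rw [hcover]; trivial
    rcases hx with (h | h) | h
    · left; rw [hA] at h; exact h
    · right; left; exact h
    · right; right; exact h
  have hne0B : ∀ x ∈ B, x ≠ 0 := fun x hx h =>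
    Set.disjoint_left.mp hAB (by rw [hA, h]; rfl) hx
  have hne0C : ∀ x ∈ C, x ≠ 0 := fun x hx h =>
    Set.disjoint_left.mp hAC (by rw [hA, h]; rfl) hx
  have hBneg : ∀ x ∈ B, -x ∈ B := by
    intro x hx
    rcases hmem (-x) with h0 | hB | hC
    · exact absurd (neg_eq_zero.mp h0) (hne0B x hx)
    · exact hB
    · exact absurd (Or.inr (Or.inr (Or.inr (Or.inr (Or.inl ⟨hC, h0A, hx⟩)))))
        (hrf (-x) 0 x (by simp))
  have hCneg : ∀ x ∈ C, -x ∈ C := by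
    intro x hx
    rcases hmem (-x) with h0 | hB | hC
    · exact absurd (neg_eq_zero.mp h0) (hne0C x hx)
    · exact absurd (Or.inr (Or.inr (Or.inl ⟨hB, h0A, hx⟩)))
        (hrf (-x) 0 x (by simp))
    · exact hC
  have hBdbl : ∀ x ∈ B, x + x ∈ B := by
    intro x hx
    rcases hmem (x + x) with h0 | hB | hC
    · have : x = 0 := h2z x (by rw [two_nsmul]; exact h0)
      exact absurd this (hne0B x hx)
    · exact hB
    · exact absurd (Or.inl ⟨h0A, hx, hC⟩)
        (hrf 0 x (x + x) (by rw [zero_add, two_nsmul]))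
  have hCdbl : ∀ x ∈ C, x + x ∈ C := by
    intro x hx
    rcases hmem (x + x) with h0 | hB | hC
    · have : x = 0 := h2z x (by rw [two_nsmul]; exact h0)
      exact absurd this (hne0C x hx)
    · exact absurd (Or.inr (Or.inl ⟨h0A, hx, hB⟩))
        (hrf 0 x (x + x) (by rw [zero_add, two_nsmul]))
    · exact hC
  have hsurj : Function.Surjective (fun t : G => 2 • t) := by
    apply Finite.injective_iff_surjective.mp
    intro a b hab
    have : 2 • (a - b) = 0 := by
      simp only at hab
      rw [smul_sub, hab, sub_self]
    exact sub_eq_zero.mp (h2z _ this)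
  refine ⟨fun x hx => ⟨hBneg x hx, hBdbl x hx⟩,
    fun x hx => ⟨hCneg x hx, hCdbl x hx⟩, ?_, ?_, ?_, ?_⟩
  · ext x
    constructor
    · rintro ⟨y, hy, rfl⟩
      simpa [two_nsmul] using hBdbl y hy
    · intro hx
      obtain ⟨y, hy⟩ := hsurj x
      refine ⟨y, ?_, hy⟩
      rcases hmem y with h0 | hB | hC
      · exfalso
        apply hne0B x hx
        rw [← hy, h0]; simp
      · exact hB
      · exfalso
        have : x ∈ C := by
          have := hCdbl y hC
          rwa [← two_nsmul, show 2 • y = x from hy] at this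
        exact Set.disjoint_left.mp hBC hx this
  · ext x
    simp only [Set.mem_neg]
    constructor
    · intro h
      simpa using hBneg _ h
    · intro h
      exact hBneg x h
  · ext x
    constructor
    · rintro ⟨y, hy, rfl⟩
      simpa [two_nsmul] using hCdbl y hy
    · intro hx
      obtain ⟨y, hy⟩ := hsurj x
      refine ⟨y, ?_, hy⟩
      rcases hmem y with h0 | hB | hC
      · exfalso
        apply hne0C x hx
        rw [← hy, h0]; simp
      · exfalso
        have : x ∈ B := by
          have := hBdbl y hB
          rwa [← two_nsmul, show 2 • y = x from hy] at this
        exact Set.disjoint_left.mp hBC this hx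
      · exact hC
  · ext x
    simp only [Set.mem_neg]
    constructor
    · intro h
      simpa using hCneg _ h
    · intro h
      exact hCneg x h
end
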